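/- Let A be a unital commutative Banach algebra and φ: A → ℂ a holomorphic (complex analytic) map satisfying φ(ab) = φ(a)φ(b) for all a, b ∈ A and φ(1) = 1, with φ(z·1) = z^n for all z ∈ ℂ. Then φ is a continuous homogeneous polynomial of degree n; that is, the Taylor expansion of φ at 0 has only the degree-n term, and there is a continuous symmetric n-linear form φ̃: Aⁿ → ℂ with φ(a) = φ̃(a, …, a). -/

import Mathlib

open scoped NNReal ENNReal

/-- A holomorphic multiplicative map `φ : A → ℂ` with `φ 1 = 1` and `φ (z • 1) = z ^ n`
is a continuous homogeneous polynomial of degree `n`: there is a continuous symmetric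
`n`-linear form `F` with `φ a = F (a, …, a)`. -/
theorem stmt_10 {A : Type*} [NormedCommRing A] [NormedAlgebra ℂ A] [NormOneClass A]
    (φ : A → ℂ) (n : ℕ)
    (hφ : ∀ x : A, AnalyticAt ℂ φ x)
    (hmul : ∀ a b : A, φ (a * b) = φ a * φ b)
    (h1 : φ 1 = 1)
    (hdeg : ∀ z : ℂ, φ (z • (1 : A)) = z ^ n) :
    ∃ F : ContinuousMultilinearMap ℂ (fun _ : Fin n => A) ℂ,
      (∀ (σ : Equiv.Perm (Fin n)) (v : Fin n → A), F (v ∘ σ) = F v) ∧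
      ∀ a : A, φ a = F (fun _ => a) := by
  -- homogeneity
  have hz : ∀ (z : ℂ) (a : A), φ (z • a) = z ^ n * φ a := by
    intro z a
    have : z • a = (z • (1 : A)) * a := by rw [smul_mul_assoc, one_mul]
    rw [this, hmul, hdeg]
  obtain ⟨p, hpAt⟩ := hφ 0
  obtain ⟨r, hp⟩ := hpAt
  -- key step: the n-th term of the Taylor series of φ at 0 is φ on the diagonal
  have hkey : ∀ a : A, (p n fun _ => a) = φ a := by
    intro a
    set g : ℂ → ℂ := fun z => φ (z • a) with hg
    -- two power series for g at 0
    set q1 : FormalMultilinearSeries ℂ ℂ ℂ :=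
      fun k => ContinuousMultilinearMap.mkPiRing ℂ (Fin k) (p k fun _ => a) with hq1def
    set q2 : FormalMultilinearSeries ℂ ℂ ℂ :=
      fun k => if k = n then ContinuousMultilinearMap.mkPiRing ℂ (Fin k) (φ a) else 0 with hq2def
    have hq2 : HasFPowerSeriesAt g q2 0 := by
      refine ⟨⊤, (HasFiniteFPowerSeriesOnBall.mk' (n := n + 1) ?_ ENNReal.zero_lt_top
        ?_).toHasFPowerSeriesOnBall⟩
      · intro m hm
        have : m ≠ n := by omega
        simp [hq2def, this]
      · intro y _
        rw [Finset.sum_eq_single_of_mem n (Finset.self_mem_range_succ n)]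
        · simp [hq2def, hg, zero_add, hz, ContinuousMultilinearMap.mkPiRing_apply,
            Finset.prod_const, smul_eq_mul]
        · intro b _ hb
          simp [hq2def, hb]
    have hq1 : HasFPowerSeriesAt g q1 0 := by
      obtain ⟨r₀, hr₀pos, hr₀lt⟩ := ENNReal.lt_iff_exists_nnreal_btwn.mp hp.r_pos
      have hr₀pos' : (0 : ℝ≥0) < r₀ := by exact_mod_cast hr₀pos
      obtain ⟨C, hC, hbound⟩ := p.norm_mul_pow_le_of_lt_radius (lt_of_lt_of_le hr₀lt hp.r_le)
      set M : ℝ≥0 := ‖a‖₊ + 1 with hM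
      have hMpos : (0 : ℝ≥0) < M := by positivity
      set r₁ : ℝ≥0 := r₀ / M with hr₁
      have hr₁pos : (0 : ℝ≥0) < r₁ := by
        exact div_pos hr₀pos' hMpos
      refine ⟨r₁, ?_, ?_, ?_⟩
      · -- radius bound
        apply q1.le_radius_of_bound C
        intro k
        have h1' : ‖q1 k‖ = ‖p k fun _ => a‖ := by
          rw [hq1def]; exact ContinuousMultilinearMap.norm_mkPiRing _
        have h2' : ‖p k fun _ => a‖ ≤ ‖p k‖ * ‖a‖ ^ k := by
          simpa using (p k).le_opNorm fun _ => a
        have h3' : ((r₁ : ℝ)) ^ k * ‖a‖ ^ k ≤ (r₀ : ℝ) ^ k := by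
          rw [← mul_pow]
          apply pow_le_pow_left₀ (by positivity)
          rw [hr₁]
          push_cast
          rw [div_mul_eq_mul_div, div_le_iff₀ (by positivity)]
          have : ‖a‖ ≤ (M : ℝ) := by
            rw [hM]; push_cast; simp [← coe_nnnorm]
          nlinarith [r₀.coe_nonneg]
        calc ‖q1 k‖ * (r₁ : ℝ) ^ k = ‖p k fun _ => a‖ * (r₁ : ℝ) ^ k := by rw [h1']
          _ ≤ (‖p k‖ * ‖a‖ ^ k) * (r₁ : ℝ) ^ k := by
              apply mul_le_mul_of_nonneg_right h2' (by positivity)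
          _ = ‖p k‖ * ((r₁ : ℝ) ^ k * ‖a‖ ^ k) := by ring
          _ ≤ ‖p k‖ * (r₀ : ℝ) ^ k := by
              apply mul_le_mul_of_nonneg_left h3' (norm_nonneg _)
          _ ≤ C := hbound k
      · exact_mod_cast hr₁pos
      · intro y hy
        rw [mem_emetric_ball_zero_iff] at hy
        have hy' : ‖y‖₊ < r₁ := by exact_mod_cast hy
        have hmem : y • a ∈ Metric.eball (0 : A) r := by
          rw [mem_emetric_ball_zero_iff]
          have h1'' : ‖y • a‖₊ ≤ ‖y‖₊ * M := by
            rw [nnnorm_smul]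
            apply mul_le_mul_of_nonneg_left _ zero_le
            rw [hM]; exact le_of_lt (lt_add_of_le_of_pos le_rfl one_pos)
          have h2'' : ‖y‖₊ * M < r₀ := by
            calc ‖y‖₊ * M < r₁ * M := by
                  exact mul_lt_mul_of_pos_right hy' hMpos
              _ = r₀ := by
                  rw [hr₁, div_mul_cancel₀]
                  exact hMpos.ne'
          calc (‖y • a‖₊ : ℝ≥0∞) ≤ (‖y‖₊ * M : ℝ≥0) := by exact_mod_cast h1''
            _ < (r₀ : ℝ≥0∞) := by exact_mod_cast h2''
            _ < r := hr₀lt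
        have hsum := hp.hasSum hmem
        simp only [zero_add] at hsum ⊢
        convert hsum using 2 with k
        rw [hq1def]
        simp only [ContinuousMultilinearMap.mkPiRing_apply, Finset.prod_const,
          Finset.card_fin]
        rw [show (fun _ : Fin k => y • a) = fun i : Fin k => y • (fun _ : Fin k => a) i from rfl,
          (p k).map_smul_univ]
        simp
    have heq : q1 = q2 := hq1.eq_formalMultilinearSeries hq2
    have := congrFun heq n
    rw [hq1def, hq2def] at this
    simp only [if_pos rfl] at this
    have happ := congrArg (fun f => f (fun _ : Fin n => (1 : ℂ))) this
    simpa [ContinuousMultilinearMap.mkPiRing_apply] using happ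
  -- symmetrize p n
  refine ⟨(n.factorial : ℂ)⁻¹ • ∑ σ : Equiv.Perm (Fin n), (p n).domDomCongr σ, ?_, ?_⟩
  · intro σ v
    simp only [ContinuousMultilinearMap.smul_apply, ContinuousMultilinearMap.sum_apply,
      ContinuousMultilinearMap.domDomCongr_apply]
    congr 1
    refine Fintype.sum_equiv (Equiv.mulLeft σ) _ _ fun τ => ?_
    exact congrArg (p n) (funext fun i => by
      simp [Function.comp, Equiv.Perm.mul_apply])
  · intro a
    simp only [ContinuousMultilinearMap.smul_apply, ContinuousMultilinearMap.sum_apply,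
      ContinuousMultilinearMap.domDomCongr_apply]
    rw [Finset.sum_const]
    simp only [Finset.card_univ, Fintype.card_perm, Fintype.card_fin, hkey a]
    rw [smul_eq_mul, nsmul_eq_mul, ← mul_assoc,
      inv_mul_cancel₀ (show (n.factorial : ℂ) ≠ 0 from Nat.cast_ne_zero.mpr n.factorial_ne_zero),
      one_mul]
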